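/- The number of extremal XY₁XY₂X-avoiding words over a k-letter alphabet is (2k)!/2^k. -/

import Mathlib

/-- `E` is an extension of `W`: `W` with one letter inserted at some position. -/
def Extends {A : Type*} (W E : List A) : Prop :=
  ∃ (W₁ W₂ : List A) (x : A), W = W₁ ++ W₂ ∧ E = W₁ ++ x :: W₂

/-- `WW'` is an almost-square: `W'` is an extension of `W`, or `W'` is obtained
from `W` by deleting one letter (equivalently, `W` is an extension of `W'`). -/
def AlmostSq {A : Type*} (W W' : List A) : Prop :=
  Extends W W' ∨ Extends W' W

/-- `U` contains a square (a nonempty factor of the form `X ++ X`). -/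
def HasSquare {A : Type*} (U : List A) : Prop :=
  ∃ X : List A, X ≠ [] ∧ X ++ X <:+: U

def SquareFree {A : Type*} (U : List A) : Prop := ¬ HasSquare U

/-- `F` realizes the pattern `X Y₁ X Y₂ X ⋯ X Y_t X` (with `2*t+1` nonempty blocks,
all odd-indexed blocks equal to `X`). -/
def RealizesPat {A : Type*} (t : ℕ) (F : List A) : Prop :=
  ∃ (X : List A) (Y : Fin t → List A), X ≠ [] ∧ (∀ i, Y i ≠ []) ∧
    F = X ++ (List.ofFn (fun i => Y i ++ X)).flatten

/-- `W` contains the pattern `X Y₁ X ⋯ X Y_t X`. -/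
def ContainsPat {A : Type*} (t : ℕ) (W : List A) : Prop :=
  ∃ F : List A, F <:+: W ∧ RealizesPat t F

/-- `W` is extremal `X Y₁ X ⋯ X Y_t X`-avoiding over the alphabet `A`. -/
def ExtremalPat {A : Type*} (t : ℕ) (W : List A) : Prop :=
  ¬ ContainsPat t W ∧ ∀ E : List A, Extends W E → ContainsPat t E

/-- `W` is extremal square-free over the alphabet `A`. -/
def ExtremalSF {A : Type*} (W : List A) : Prop :=
  SquareFree W ∧ ∀ E : List A, Extends W E → HasSquare E

namespace Aux8

variable {A : Type*}

/-- Index form of containing the pattern with t = 2 : a single letter occurs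
at three positions with both gaps at least 2. -/
def Sp (W : List A) : Prop :=
  ∃ (a : A) (i j l : ℕ), i + 2 ≤ j ∧ j + 2 ≤ l ∧
    W[i]? = some a ∧ W[j]? = some a ∧ W[l]? = some a

/-- Split form. -/
def Sp' (W : List A) : Prop :=
  ∃ (a : A) (P u v Q : List A), u ≠ [] ∧ v ≠ [] ∧
    W = P ++ a :: (u ++ a :: (v ++ a :: Q))

lemma containsPat_iff_sp' (W : List A) : ContainsPat 2 W ↔ Sp' W := by
  constructor
  · rintro ⟨F, ⟨P, Q, hW⟩, X, Y, hX, hY, rfl⟩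
    obtain ⟨a, X', rfl⟩ := List.exists_cons_of_ne_nil hX
    refine ⟨a, P, X' ++ Y 0, X' ++ Y 1, X' ++ Q,
      fun h => hY 0 (List.append_eq_nil_iff.mp h).2,
      fun h => hY 1 (List.append_eq_nil_iff.mp h).2, ?_⟩
    rw [← hW]
    simp [List.ofFn_succ, List.append_assoc]
  · rintro ⟨a, P, u, v, Q, hu, hv, rfl⟩
    refine ⟨a :: (u ++ a :: (v ++ [a])), ⟨P, Q, by simp⟩,
      [a], fun i => if i = 0 then u else v, by simp, ?_, ?_⟩
    · intro i; fin_cases i <;> simp [hu, hv]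
    · simp [List.ofFn_succ]

lemma getP (P Z : List A) (a : A) : (P ++ a :: Z)[P.length]? = some a := by
  rw [List.getElem?_append_right (le_refl _)]; simp

lemma sp'_iff_sp (W : List A) : Sp' W ↔ Sp W := by
  constructor
  · rintro ⟨a, P, u, v, Q, hu, hv, rfl⟩
    have hu1 : 1 ≤ u.length := List.length_pos_iff_ne_nil.mpr hu
    have hv1 : 1 ≤ v.length := List.length_pos_iff_ne_nil.mpr hv
    refine ⟨a, P.length, P.length + 1 + u.length, P.length + 2 + u.length + v.length,
      by omega, by omega, getP _ _ _, ?_, ?_⟩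
    · have e : P ++ a :: (u ++ a :: (v ++ a :: Q))
          = (P ++ a :: u) ++ a :: (v ++ a :: Q) := by simp [List.append_assoc]
      rw [e]
      have : P.length + 1 + u.length = (P ++ a :: u).length := by simp; omega
      rw [this]; exact getP _ _ _
    · have e : P ++ a :: (u ++ a :: (v ++ a :: Q))
          = (P ++ a :: u ++ a :: v) ++ a :: Q := by simp [List.append_assoc]
      rw [e]
      have : P.length + 2 + u.length + v.length = (P ++ a :: u ++ a :: v).length := by
        simp; omega
      rw [this]; exact getP _ _ _
  · rintro ⟨a, i, j, l, hij, hjl, hi, hj, hl⟩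
    have hiW : i < W.length := (List.getElem?_eq_some_iff.mp hi).1
    have hjW : j < W.length := (List.getElem?_eq_some_iff.mp hj).1
    have hlW : l < W.length := (List.getElem?_eq_some_iff.mp hl).1
    have e1 : W = W.take i ++ a :: W.drop (i+1) := by
      conv_lhs => rw [← List.take_append_drop i W]
      rw [List.drop_eq_getElem_cons hiW, (List.getElem?_eq_some_iff.mp hi).2]
    have e2 : W.drop (i+1) = (W.drop (i+1)).take (j - (i+1)) ++ W.drop j := by
      conv_lhs => rw [← List.take_append_drop (j - (i+1)) (W.drop (i+1))]
      rw [List.drop_drop]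
      congr 2
      omega
    have e3 : W.drop j = a :: W.drop (j+1) := by
      rw [List.drop_eq_getElem_cons hjW, (List.getElem?_eq_some_iff.mp hj).2]
    have e4 : W.drop (j+1) = (W.drop (j+1)).take (l - (j+1)) ++ W.drop l := by
      conv_lhs => rw [← List.take_append_drop (l - (j+1)) (W.drop (j+1))]
      rw [List.drop_drop]
      congr 2
      omega
    have e5 : W.drop l = a :: W.drop (l+1) := by
      rw [List.drop_eq_getElem_cons hlW, (List.getElem?_eq_some_iff.mp hl).2]
    refine ⟨a, W.take i, (W.drop (i+1)).take (j - (i+1)), (W.drop (j+1)).take (l - (j+1)),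
      W.drop (l+1), ?_, ?_, ?_⟩
    · rw [← List.length_pos_iff_ne_nil]  -- hope name ok
      rw [List.length_take, List.length_drop]
      omega
    · rw [← List.length_pos_iff_ne_nil]
      rw [List.length_take, List.length_drop]
      omega
    · conv_lhs => rw [e1, e2, e3, e4, e5]


lemma containsPat_iff_sp (W : List A) : ContainsPat 2 W ↔ Sp W := by
  rw [containsPat_iff_sp', sp'_iff_sp]

/-! ### getElem? facts for one-letter insertions -/

section Ins

variable (W₁ W₂ : List A) (x : A)

lemma insGet_lt {q : ℕ} (h : q < W₁.length) :
    (W₁ ++ x :: W₂)[q]? = (W₁ ++ W₂)[q]? := by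
  rw [List.getElem?_append_left h, List.getElem?_append_left h]

lemma insGet_eq : (W₁ ++ x :: W₂)[W₁.length]? = some x := by
  rw [List.getElem?_append_right (le_refl _)]; simp

lemma insGet_gt {q : ℕ} (h : W₁.length ≤ q) :
    (W₁ ++ x :: W₂)[q + 1]? = (W₁ ++ W₂)[q]? := by
  rw [List.getElem?_append_right (by omega : W₁.length ≤ q + 1),
    List.getElem?_append_right h]
  have : q + 1 - W₁.length = (q - W₁.length) + 1 := by omega
  rw [this]; simp

end Ins

/-! ### The doubling map -/

def D (w : List A) : List A := w.flatMap fun a => [a, a]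

@[simp] lemma D_nil : D ([] : List A) = [] := rfl

@[simp] lemma D_cons (a : A) (w : List A) : D (a :: w) = a :: a :: D w := rfl

lemma D_get (w : List A) (i : ℕ) : (D w)[i]? = w[i / 2]? := by
  induction w generalizing i with
  | nil => simp
  | cons b T ih =>
    match i with
    | 0 => simp
    | 1 => simp
    | (q+2) =>
      have h2 : (q+2)/2 = q/2 + 1 := by omega
      simp only [D_cons, List.getElem?_cons_succ, h2, ih q]

lemma D_length (w : List A) : (D w).length = 2 * w.length := by
  induction w with
  | nil => simp
  | cons b T ih => simp [ih]; omega

lemma D_inj : Function.Injective (D (A := A)) := by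
  intro w w' h
  induction w generalizing w' with
  | nil => cases w' with
    | nil => rfl
    | cons b T => simp [D] at h
  | cons b T ih =>
    cases w' with
    | nil => simp [D] at h
    | cons c S =>
      simp only [D_cons, List.cons.injEq] at h
      obtain ⟨rfl, -, hD⟩ := h
      rw [ih hD]

lemma count_zero_iff [DecidableEq A] (w : List A) (x : A) :
    w.count x = 0 ↔ ∀ q : ℕ, w[q]? ≠ some x := by
  rw [List.count_eq_zero, List.mem_iff_getElem?]
  push_neg
  rfl

lemma count_one_iff [DecidableEq A] (w : List A) (x : A) :
    w.count x = 1 ↔ ∃ q1 : ℕ, ∀ q : ℕ, (w[q]? = some x ↔ q = q1) := by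
  induction w with
  | nil =>
    simp only [List.count_nil]
    constructor
    · intro h; omega
    · rintro ⟨q1, h⟩
      have := (h q1).mpr rfl
      simp at this
  | cons b T ih =>
    rw [List.count_cons]
    by_cases hb : b = x
    · subst hb
      simp only [beq_self_eq_true, if_true]
      constructor
      · intro h
        have h0 : T.count b = 0 := by omega
        rw [count_zero_iff] at h0
        refine ⟨0, fun q => ?_⟩
        match q with
        | 0 => simp
        | q+1 =>
          simp only [List.getElem?_cons_succ]
          constructor
          · intro hq; exact absurd hq (h0 q)
          · omega
      · rintro ⟨q1, h⟩
        have h0 : (0 : ℕ) = q1 := (h 0).mp (by simp)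
        have hT : T.count b = 0 := by
          rw [count_zero_iff]
          intro q hq
          have := (h (q+1)).mp (by simpa using hq)
          omega
        omega
    · have hbx : (b == x) = false := beq_eq_false_iff_ne.mpr hb
      rw [hbx]
      simp only [Bool.false_eq_true, if_false, add_zero, ih]
      constructor
      · rintro ⟨q1, h⟩
        refine ⟨q1+1, fun q => ?_⟩
        match q with
        | 0 =>
          simp only [List.getElem?_cons_zero]
          constructor
          · intro h0; exact absurd (Option.some.inj h0) hb
          · omega
        | q+1 =>
          simp only [List.getElem?_cons_succ, h q]
          omega
      · rintro ⟨q1, h⟩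
        match q1 with
        | 0 =>
          have := (h 0).mpr rfl
          simp only [List.getElem?_cons_zero] at this
          exact absurd (Option.some.inj this) hb
        | q1+1 =>
          refine ⟨q1, fun q => ?_⟩
          have := h (q+1)
          simp only [List.getElem?_cons_succ] at this
          rw [this]
          omega

lemma count_two_iff [DecidableEq A] (w : List A) (x : A) :
    w.count x = 2 ↔ ∃ q1 q2 : ℕ, q1 < q2 ∧ ∀ q : ℕ, (w[q]? = some x ↔ q = q1 ∨ q = q2) := by
  induction w with
  | nil =>
    simp only [List.count_nil]
    constructor
    · intro h; omega
    · rintro ⟨q1, q2, hlt, h⟩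
      have := (h q1).mpr (Or.inl rfl)
      simp at this
  | cons b T ih =>
    rw [List.count_cons]
    by_cases hb : b = x
    · subst hb
      simp only [beq_self_eq_true, if_true]
      constructor
      · intro h
        have h1 : T.count b = 1 := by omega
        obtain ⟨q1, hq1⟩ := (count_one_iff T b).mp h1
        refine ⟨0, q1 + 1, by omega, fun q => ?_⟩
        match q with
        | 0 => simp
        | q+1 =>
          simp only [List.getElem?_cons_succ, hq1 q]
          omega
      · rintro ⟨q1, q2, hlt, h⟩
        have h0 : (0:ℕ) = q1 ∨ (0:ℕ) = q2 := (h 0).mp (by simp)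
        have hq1 : q1 = 0 := by omega
        subst hq1
        have hT : T.count b = 1 := by
          rw [count_one_iff]
          match q2, hlt with
          | q2+1, _ =>
            refine ⟨q2, fun q => ?_⟩
            have := h (q+1)
            simp only [List.getElem?_cons_succ] at this
            rw [this]
            omega
        omega
    · have hbx : (b == x) = false := beq_eq_false_iff_ne.mpr hb
      rw [hbx]
      simp only [Bool.false_eq_true, if_false, add_zero, ih]
      constructor
      · rintro ⟨q1, q2, hlt, h⟩
        refine ⟨q1+1, q2+1, by omega, fun q => ?_⟩
        match q with
        | 0 =>
          simp only [List.getElem?_cons_zero]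
          constructor
          · intro h0; exact absurd (Option.some.inj h0) hb
          · omega
        | q+1 =>
          simp only [List.getElem?_cons_succ, h q]
          omega
      · rintro ⟨q1, q2, hlt, h⟩
        match q1, q2, hlt with
        | 0, _, _ =>
          have := (h 0).mpr (Or.inl rfl)
          simp only [List.getElem?_cons_zero] at this
          exact absurd (Option.some.inj this) hb
        | q1+1, 0, hlt => omega
        | q1+1, q2+1, hlt =>
          refine ⟨q1, q2, by omega, fun q => ?_⟩
          have := h (q+1)
          simp only [List.getElem?_cons_succ] at this
          rw [this]
          omega

/-! ### Direction I : doublings of multiset permutations are extremal -/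

theorem extremal_of_doubling [DecidableEq A] (w : List A)
    (hw : ∀ x : A, w.count x = 2) : ExtremalPat 2 (D w) := by
  constructor
  · rw [containsPat_iff_sp]
    rintro ⟨a, i, j, l, hij, hjl, hi, hj, hl⟩
    obtain ⟨q1, q2, hlt, hq⟩ := (count_two_iff w a).mp (hw a)
    rw [D_get] at hi hj hl
    have h1 := (hq _).mp hi
    have h2 := (hq _).mp hj
    have h3 := (hq _).mp hl
    omega
  · rintro E ⟨W₁, W₂, x, hW, rfl⟩
    rw [containsPat_iff_sp]
    obtain ⟨q1, q2, hlt, hq⟩ := (count_two_iff w x).mp (hw x)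
    have hgd : ∀ m q : ℕ, m / 2 = q → (q = q1 ∨ q = q2) → (D w)[m]? = some x := by
      intro m q hm hor
      rw [D_get, hm]
      exact (hq q).mpr hor
    set p := W₁.length with hp
    have hElt : ∀ q, q < p → (W₁ ++ x :: W₂)[q]? = (D w)[q]? := by
      intro q h; rw [insGet_lt _ _ _ h, ← hW]
    have hEp : (W₁ ++ x :: W₂)[p]? = some x := insGet_eq _ _ _
    have hEgt : ∀ q, p ≤ q → (W₁ ++ x :: W₂)[q+1]? = (D w)[q]? := by
      intro q h; rw [insGet_gt _ _ _ h, ← hW]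
    rcases (show p ≤ 2*q1 ∨ p = 2*q1+1 ∨ (2*q1+2 ≤ p ∧ p ≤ 2*q2) ∨ p = 2*q2+1 ∨ 2*q2+2 ≤ p
        by omega) with h | h | h | h | h
    · exact ⟨x, p, 2*q1+1+1, 2*q2+1+1, by omega, by omega, hEp,
        by rw [hEgt _ (by omega)]; exact hgd _ q1 (by omega) (Or.inl rfl),
        by rw [hEgt _ (by omega)]; exact hgd _ q2 (by omega) (Or.inr rfl)⟩
    · exact ⟨x, 2*q1, 2*q1+1+1, 2*q2+1+1, by omega, by omega,
        by rw [hElt _ (by omega)]; exact hgd _ q1 (by omega) (Or.inl rfl),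
        by rw [hEgt _ (by omega)]; exact hgd _ q1 (by omega) (Or.inl rfl),
        by rw [hEgt _ (by omega)]; exact hgd _ q2 (by omega) (Or.inr rfl)⟩
    · exact ⟨x, 2*q1, p, 2*q2+1+1, by omega, by omega,
        by rw [hElt _ (by omega)]; exact hgd _ q1 (by omega) (Or.inl rfl),
        hEp,
        by rw [hEgt _ (by omega)]; exact hgd _ q2 (by omega) (Or.inr rfl)⟩
    · exact ⟨x, 2*q1, 2*q2, 2*q2+1+1, by omega, by omega,
        by rw [hElt _ (by omega)]; exact hgd _ q1 (by omega) (Or.inl rfl),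
        by rw [hElt _ (by omega)]; exact hgd _ q2 (by omega) (Or.inr rfl),
        by rw [hEgt _ (by omega)]; exact hgd _ q2 (by omega) (Or.inr rfl)⟩
    · exact ⟨x, 2*q1, 2*q2, p, by omega, by omega,
        by rw [hElt _ (by omega)]; exact hgd _ q1 (by omega) (Or.inl rfl),
        by rw [hElt _ (by omega)]; exact hgd _ q2 (by omega) (Or.inr rfl),
        hEp⟩


/-! ### Direction II : extremal words are doublings -/

lemma sp_ext (W : List A) (x : A) (p : ℕ) (hp : p ≤ W.length) (hnsp : ¬ Sp W)
    (h : Sp (W.take p ++ x :: W.drop p)) :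
    (∃ j l, W[j]? = some x ∧ W[l]? = some x ∧ p + 1 ≤ j ∧ j + 2 ≤ l) ∨
    (∃ i l, W[i]? = some x ∧ W[l]? = some x ∧ i + 2 ≤ p ∧ p + 1 ≤ l) ∨
    (∃ i j, W[i]? = some x ∧ W[j]? = some x ∧ i + 2 ≤ j ∧ j + 2 ≤ p) ∨
    (∃ (a : A) (m l : ℕ), m + 1 = p ∧ W[m]? = some a ∧ W[p]? = some a ∧
      W[l]? = some a ∧ p + 2 ≤ l) ∨
    (∃ (a : A) (m i : ℕ), m + 1 = p ∧ W[m]? = some a ∧ W[p]? = some a ∧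
      W[i]? = some a ∧ i + 2 ≤ m) := by
  have hlen : (W.take p).length = p := by rw [List.length_take]; omega
  have hElt : ∀ q, q < p → (W.take p ++ x :: W.drop p)[q]? = W[q]? := by
    intro q hq
    rw [insGet_lt _ _ _ (by omega), List.take_append_drop]
  have hEp : (W.take p ++ x :: W.drop p)[p]? = some x := by
    have := insGet_eq (W.take p) (W.drop p) x
    rwa [hlen] at this
  have hEgt : ∀ q, p ≤ q → (W.take p ++ x :: W.drop p)[q+1]? = W[q]? := by
    intro q hq
    rw [insGet_gt _ _ _ (by omega), List.take_append_drop]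
  obtain ⟨a, i, j, l, hij, hjl, hi, hj, hl⟩ := h
  have key : ∀ q, ((W.take p ++ x :: W.drop p)[q]? = some a) →
      (q = p ∧ a = x) ∨ (q < p ∧ W[q]? = some a) ∨ (p + 1 ≤ q ∧ W[q-1]? = some a) := by
    intro q hq
    rcases lt_trichotomy q p with hc | hc | hc
    · right; left; exact ⟨hc, by rw [← hElt q hc]; exact hq⟩
    · subst hc
      rw [hEp] at hq
      exact Or.inl ⟨rfl, (Option.some.inj hq).symm⟩
    · right; right
      refine ⟨hc, ?_⟩
      have := hEgt (q-1) (by omega)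
      rw [show q-1+1 = q from by omega] at this
      rw [← this]; exact hq
  rcases key i hi with ⟨rfl, rfl⟩ | ⟨hi1, hi2⟩ | ⟨hi1, hi2⟩ <;>
    rcases key j hj with ⟨hj0, hj3⟩ | ⟨hj1, hj2⟩ | ⟨hj1, hj2⟩ <;>
      rcases key l hl with ⟨hl0, hl3⟩ | ⟨hl1, hl2⟩ | ⟨hl1, hl2⟩
  all_goals try omega
  -- i = p (a = x): j, l > p
  · exact Or.inl ⟨j-1, l-1, hj2, hl2, by omega, by omega⟩
  -- j = p (a = x): i < p, l > p
  · subst hj3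
    exact Or.inr (Or.inl ⟨i, l-1, hi2, hl2, by omega, by omega⟩)
  -- l = p: i, j < p
  · subst hl3
    exact Or.inr (Or.inr (Or.inl ⟨i, j, hi2, hj2, by omega, by omega⟩))
  -- all < p
  · exact absurd ⟨a, i, j, l, hij, hjl, hi2, hj2, hl2⟩ hnsp
  -- i, j < p, l > p
  · by_cases hg : j + 2 ≤ l - 1
    · exact absurd ⟨a, i, j, l-1, hij, hg, hi2, hj2, hl2⟩ hnsp
    · have hjp : j = p - 1 ∧ l = p + 1 := by omega
      refine Or.inr (Or.inr (Or.inr (Or.inr ⟨a, j, i, by omega, hj2, ?_, hi2, by omega⟩)))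
      rw [show p = l - 1 from by omega]; exact hl2
  -- i < p, j, l > p
  · by_cases hg : i + 2 ≤ j - 1
    · exact absurd ⟨a, i, j-1, l-1, hg, by omega, hi2, hj2, hl2⟩ hnsp
    · have hjp : i = p - 1 ∧ j = p + 1 := by omega
      refine Or.inr (Or.inr (Or.inr (Or.inl ⟨a, i, l-1, by omega, hi2, ?_, hl2, by omega⟩)))
      rw [show p = j - 1 from by omega]; exact hj2
  -- all > p
  · exact absurd ⟨a, i-1, j-1, l-1, by omega, by omega, hi2, hj2, hl2⟩ hnsp

theorem str [DecidableEq A] (W : List A) (hnsp : ¬ Sp W)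
    (hext : ∀ p, p ≤ W.length → ∀ x : A, Sp (W.take p ++ x :: W.drop p)) (x : A) :
    ∃ s t : ℕ, s + 3 ≤ t ∧
      ∀ i : ℕ, (W[i]? = some x ↔ i = s ∨ i = s+1 ∨ i = t-1 ∨ i = t) := by
  have hjlen : ∀ i : ℕ, W[i]? = some x → i < W.length :=
    fun i h => (List.getElem?_eq_some_iff.mp h).1
  -- step 1 : two occurrences with a gap
  have step1 : ∃ j0 l0 : ℕ, W[j0]? = some x ∧ W[l0]? = some x ∧ 1 ≤ j0 ∧ j0 + 2 ≤ l0 := by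
    rcases sp_ext W x 0 (by omega) hnsp (hext 0 (by omega) x) with
      ⟨j, l, hj, hl, h1, h2⟩ | ⟨i, l, hi, hl, h1, h2⟩ | ⟨i, j, hi, hj, h1, h2⟩ |
      ⟨a, m, l, hm1, _⟩ | ⟨a, m, i, hm1, _⟩
    · exact ⟨j, l, hj, hl, by omega, h2⟩
    all_goals omega
  obtain ⟨j0, l0, hj0, hl0, hj01, hj0l0⟩ := step1
  have hex : ∃ i : ℕ, W[i]? = some x := ⟨j0, hj0⟩
  set s := Nat.find hex with hs
  have hsS : W[s]? = some x := Nat.find_spec hex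
  have hsmin : ∀ i : ℕ, W[i]? = some x → s ≤ i := fun i h => Nat.find_min' hex h
  set t := Nat.findGreatest (fun i => W[i]? = some x) W.length with ht
  have htS : W[t]? = some x := by
    have := Nat.findGreatest_spec (P := fun i => W[i]? = some x)
      (le_of_lt (hjlen l0 hl0)) hl0
    exact this
  have htmax : ∀ i : ℕ, W[i]? = some x → i ≤ t := by
    intro i h
    have := Nat.le_findGreatest (P := fun i => W[i]? = some x)
      (le_of_lt (hjlen i h)) h
    exact this
  have hst2 : s + 2 ≤ t := by
    have h1 := hsmin j0 hj0
    have h2 := htmax l0 hl0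
    omega
  have hmid : ∀ j : ℕ, W[j]? = some x → j ≤ s+1 ∨ t ≤ j+1 := by
    intro j hj
    by_contra hc
    push_neg at hc
    exact hnsp ⟨x, s, j, t, by omega, by omega, hsS, hj, htS⟩
  have hslen : s < W.length := hjlen s hsS
  have htlen : t < W.length := hjlen t htS
  -- insertion at s+1
  have hs1 : W[s+1]? = some x := by
    rcases sp_ext W x (s+1) (by omega) hnsp (hext (s+1) (by omega) x) with
      ⟨j, l, hj, hl, h1, h2⟩ | ⟨i, l, hi, hl, h1, h2⟩ | ⟨i, j, hi, hj, h1, h2⟩ |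
      ⟨a, m, l, hm1, hm, hpp, hl, h1⟩ | ⟨a, m, i, hm1, hm, hpp, hi, h1⟩
    · exfalso
      have := hmid j hj
      have := htmax l hl
      omega
    · exfalso; have := hsmin i hi; omega
    · exfalso; have := hsmin j hj; omega
    · have hms : m = s := by omega
      rw [hms] at hm
      have hax : a = x := Option.some.inj (hm.symm.trans hsS)
      rw [hax] at hpp
      exact hpp
    · exfalso
      have hms : m = s := by omega
      rw [hms] at hm
      have hax : a = x := Option.some.inj (hm.symm.trans hsS)
      rw [hax] at hi
      have := hsmin i hi
      omega
  -- t ≥ s + 3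
  have hst3 : s + 3 ≤ t := by
    by_contra hc
    have ht2 : t = s + 2 := by omega
    rcases sp_ext W x (s+1) (by omega) hnsp (hext (s+1) (by omega) x) with
      ⟨j, l, hj, hl, h1, h2⟩ | ⟨i, l, hi, hl, h1, h2⟩ | ⟨i, j, hi, hj, h1, h2⟩ |
      ⟨a, m, l, hm1, hm, hpp, hl, h1⟩ | ⟨a, m, i, hm1, hm, hpp, hi, h1⟩
    · have := htmax l hl; have := htmax j hj; omega
    · have := hsmin i hi; omega
    · have := hsmin i hi; omega
    · have hms : m = s := by omega
      rw [hms] at hm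
      have hax : a = x := Option.some.inj (hm.symm.trans hsS)
      rw [hax] at hl
      have := htmax l hl
      omega
    · have hms : m = s := by omega
      rw [hms] at hm
      have hax : a = x := Option.some.inj (hm.symm.trans hsS)
      rw [hax] at hi
      have := hsmin i hi
      omega
  -- insertion at t
  have ht1 : W[t-1]? = some x := by
    rcases sp_ext W x t (by omega) hnsp (hext t (by omega) x) with
      ⟨j, l, hj, hl, h1, h2⟩ | ⟨i, l, hi, hl, h1, h2⟩ | ⟨i, j, hi, hj, h1, h2⟩ |
      ⟨a, m, l, hm1, hm, hpp, hl, h1⟩ | ⟨a, m, i, hm1, hm, hpp, hi, h1⟩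
    · exfalso; have := htmax j hj; omega
    · exfalso; have := htmax l hl; omega
    · exfalso
      have := hsmin i hi
      have := hmid j hj
      omega
    · exfalso
      have hax : a = x := Option.some.inj (hpp.symm.trans htS)
      rw [hax] at hl
      have := htmax l hl
      omega
    · have hax : a = x := Option.some.inj (hpp.symm.trans htS)
      rw [hax] at hm
      rw [show t-1 = m from by omega]
      exact hm
  refine ⟨s, t, hst3, fun i => ⟨fun h => ?_, fun h => ?_⟩⟩
  · have h1 := hsmin i h
    have h2 := htmax i h
    have h3 := hmid i h
    omega
  · rcases h with rfl | rfl | rfl | rfl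
    · exact hsS
    · exact hs1
    · exact ht1
    · exact htS

lemma pair_to_D : ∀ (n : ℕ) (V : List A), V.length = n →
    (∀ m : ℕ, 2 ∣ m → V[m]? = V[m+1]?) →
    ∃ w : List A, V = D w ∧ ∀ q : ℕ, w[q]? = V[2*q]? := by
  intro n
  induction n using Nat.strong_induction_on with
  | _ n IH =>
    intro V hlen hpair
    match V with
    | [] => exact ⟨[], rfl, by simp [D]⟩
    | [a] =>
      exfalso
      have := hpair 0 (by omega)
      simp at this
    | a :: b :: T =>
      have hab : a = b := by
        have := hpair 0 (by omega)
        simpa using this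
      have hT : ∀ m : ℕ, 2 ∣ m → T[m]? = T[m+1]? := by
        intro m hm
        have := hpair (m+2) (by omega)
        simpa using this
      have hTlen : T.length < n := by
        simp at hlen
        omega
      obtain ⟨w', hw', hget⟩ := IH T.length hTlen T rfl hT
      refine ⟨a :: w', ?_, ?_⟩
      · rw [D_cons, ← hw', hab]
      · intro q
        match q with
        | 0 => simp
        | q+1 =>
          have h1 : (a :: w')[q+1]? = w'[q]? := by simp
          have h2 : 2*(q+1) = 2*q+1+1 := by omega
          rw [h1, hget q, h2]
          simp

theorem doubling_of_extremal [DecidableEq A] (W : List A)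
    (hW : ExtremalPat 2 W) : ∃ w : List A, (∀ x : A, w.count x = 2) ∧ W = D w := by
  obtain ⟨h1, h2⟩ := hW
  rw [containsPat_iff_sp] at h1
  have hext : ∀ p, p ≤ W.length → ∀ x : A, Sp (W.take p ++ x :: W.drop p) := by
    intro p hp x
    rw [← containsPat_iff_sp]
    exact h2 _ ⟨W.take p, W.drop p, x, (List.take_append_drop p W).symm, rfl⟩
  have hstr := str W h1 hext
  have pair : ∀ m : ℕ, 2 ∣ m → W[m]? = W[m+1]? := by
    intro m
    induction m using Nat.strong_induction_on with
    | _ m IH =>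
      intro hm2
      by_cases hmlen : m < W.length
      · have hxm : W[m]? = some (W[m]'hmlen) := List.getElem?_eq_getElem hmlen
        set x := W[m]'hmlen with hx
        obtain ⟨s, t, hst, hiff⟩ := hstr x
        have hmS := (hiff m).mp hxm
        by_cases hcs : m = s
        · rw [hxm, (hiff (m+1)).mpr (Or.inr (Or.inl (by omega)))]
        · by_cases hct : m = t - 1
          · rw [hxm, (hiff (m+1)).mpr (Or.inr (Or.inr (Or.inr (by omega))))]
          · rcases hmS with h | h | h | h
            · omega
            · -- m = s + 1
              exfalso
              have hm2' : 2 ≤ m := by omega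
              have hIH := IH (m-2) (by omega) (by omega)
              rw [show m-2+1 = m-1 from by omega] at hIH
              have he : W[m-2]? = some x := by
                rw [hIH]
                exact (hiff (m-1)).mpr (Or.inl (by omega))
              have := (hiff (m-2)).mp he
              omega
            · omega
            · -- m = t
              exfalso
              have hm4 : 4 ≤ m ∨ ¬ 4 ≤ m := by omega
              have hIH := IH (m-2) (by omega) (by omega)
              rw [show m-2+1 = m-1 from by omega] at hIH
              have he : W[m-2]? = some x := by
                rw [hIH]
                exact (hiff (m-1)).mpr (Or.inr (Or.inr (Or.inl (by omega))))
              have h9 := (hiff (m-2)).mp he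
              have h10 : m - 2 = s + 1 := by omega
              have hIH4 := IH (m-4) (by omega) (by omega)
              rw [show m-4+1 = m-3 from by omega] at hIH4
              have he4 : W[m-4]? = some x := by
                rw [hIH4]
                exact (hiff (m-3)).mpr (Or.inl (by omega))
              have := (hiff (m-4)).mp he4
              omega
      · push_neg at hmlen
        rw [List.getElem?_eq_none hmlen, List.getElem?_eq_none (by omega)]
  obtain ⟨w, hwD, hwget⟩ := pair_to_D W.length W rfl pair
  refine ⟨w, ?_, hwD⟩
  intro x
  obtain ⟨s, t, hst, hiff⟩ := hstr x
  have hseven : 2 ∣ s := by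
    by_contra hodd
    have hp := pair (s-1) (by omega)
    rw [show s-1+1 = s from by omega] at hp
    have hoc : W[s-1]? = some x := by
      rw [hp]
      exact (hiff s).mpr (Or.inl rfl)
    have := (hiff (s-1)).mp hoc
    omega
  have htodd : ¬ 2 ∣ t := by
    intro heven
    have hp := pair t heven
    have hoc : W[t+1]? = some x := by
      rw [← hp]
      exact (hiff t).mpr (Or.inr (Or.inr (Or.inr rfl)))
    have := (hiff (t+1)).mp hoc
    omega
  rw [count_two_iff]
  refine ⟨s/2, (t-1)/2, by omega, fun q => ?_⟩
  rw [hwget q, hiff (2*q)]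
  omega


/-! ### Counting -/

def h2 {k : ℕ} (j : Fin (2*k)) : Fin k := ⟨j.val / 2, by have := j.isLt; omega⟩

def Phi {k : ℕ} (σ : Equiv.Perm (Fin (2*k))) : List (Fin k) := List.ofFn (fun i => h2 (σ i))

lemma count_ofFn {k n : ℕ} (f : Fin n → Fin k) (x : Fin k) :
    (List.ofFn f).count x = (Finset.univ.filter fun i => f i = x).card := by
  induction n with
  | zero => simp
  | succ n ih =>
    rw [List.ofFn_succ, List.count_cons, ih (fun i => f i.succ)]
    rw [Finset.card_filter, Finset.card_filter, Fin.sum_univ_succ]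
    have : ∀ b : Fin k, (if (b == x) = true then 1 else 0) = if b = x then 1 else 0 := by
      intro b; by_cases h : b = x <;> simp [h]
    rw [this]
    omega

lemma length_eq_of_counts {k : ℕ} (w : List (Fin k)) (hw : ∀ x : Fin k, w.count x = 2) :
    w.length = 2 * k := by
  have h1 : ∑ a ∈ (↑w : Multiset (Fin k)).toFinset, Multiset.count a (↑w : Multiset (Fin k))
      = Multiset.card (↑w : Multiset (Fin k)) := Multiset.toFinset_sum_count_eq _
  have h2 : ∑ a ∈ (↑w : Multiset (Fin k)).toFinset, Multiset.count a (↑w : Multiset (Fin k))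
      = ∑ a : Fin k, Multiset.count a (↑w : Multiset (Fin k)) := by
    refine Finset.sum_subset (Finset.subset_univ _) ?_
    intro x _ hx
    simp only [Multiset.mem_toFinset] at hx
    simp [Multiset.count_eq_zero_of_notMem hx]
  have h3 : ∀ a : Fin k, Multiset.count a (↑w : Multiset (Fin k)) = 2 := by
    intro a
    rw [Multiset.coe_count]
    exact hw a
  have h4 : Multiset.card (↑w : Multiset (Fin k)) = w.length := by simp
  rw [h2, h4] at h1
  rw [← h1]
  simp [h3]
  omega

lemma phi_mem {k : ℕ} (σ : Equiv.Perm (Fin (2*k))) (x : Fin k) : (Phi σ).count x = 2 := by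
  rw [Phi, count_ofFn]
  have e1 : (Finset.univ.filter fun i => h2 (σ i) = x)
      = (Finset.univ.filter fun j => h2 j = x).map σ.symm.toEmbedding := by
    ext i
    simp only [Finset.mem_filter, Finset.mem_map, Finset.mem_univ, true_and,
      Equiv.coe_toEmbedding]
    constructor
    · intro h
      exact ⟨σ i, h, Equiv.symm_apply_apply _ _⟩
    · rintro ⟨j, hj, rfl⟩
      rwa [Equiv.apply_symm_apply]
  rw [e1, Finset.card_map]
  have e2 : (Finset.univ.filter fun j : Fin (2*k) => h2 j = x)
      = {(⟨2*x.val, by have := x.isLt; omega⟩ : Fin (2*k)), ⟨2*x.val+1, by have := x.isLt; omega⟩} := by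
    ext j
    simp only [Finset.mem_filter, Finset.mem_univ, true_and, Finset.mem_insert,
      Finset.mem_singleton]
    rw [show (h2 j = x) ↔ (j.val / 2 = x.val) from by
      constructor
      · intro h; exact congrArg Fin.val h
      · intro h; exact Fin.ext h]
    rw [Fin.ext_iff, Fin.ext_iff]
    simp only []
    omega
  rw [e2, Finset.card_pair (Fin.ne_of_val_ne (by simp))]

section Fiber
variable {k : ℕ}

def gmap (w : List (Fin k)) (q1 : Fin k → ℕ) (ε : Fin k → Bool)
    (hwl : ∀ i : ℕ, i < 2*k → i < w.length) (i : Fin (2*k)) : Fin (2*k) :=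
  ⟨2 * (w[i.val]'(hwl _ i.isLt)).val +
    (if i.val = q1 (w[i.val]'(hwl _ i.isLt))
      then (if ε (w[i.val]'(hwl _ i.isLt)) then 0 else 1)
      else (if ε (w[i.val]'(hwl _ i.isLt)) then 1 else 0)),
    by have := (w[i.val]'(hwl _ i.isLt)).isLt; split_ifs <;> omega⟩

lemma fiber_card (w : List (Fin k)) (hw : ∀ x : Fin k, w.count x = 2) :
    (Finset.univ.filter fun σ : Equiv.Perm (Fin (2*k)) => Phi σ = w).card = 2^k := by
  classical
  have hlen : w.length = 2*k := length_eq_of_counts w hw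
  choose q1 q2 hlt hq using fun x => (count_two_iff w x).mp (hw x)
  have hwl : ∀ i : ℕ, i < 2*k → i < w.length := by omega
  have hq1lt : ∀ x, q1 x < 2*k := by
    intro x
    have h := (hq x (q1 x)).mpr (Or.inl rfl)
    have := (List.getElem?_eq_some_iff.mp h).1
    omega
  have hq2lt : ∀ x, q2 x < 2*k := by
    intro x
    have h := (hq x (q2 x)).mpr (Or.inr rfl)
    have := (List.getElem?_eq_some_iff.mp h).1
    omega
  have hvq1 : ∀ x, w[q1 x]'(hwl _ (hq1lt x)) = x := by
    intro x
    have h := (hq x (q1 x)).mpr (Or.inl rfl)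
    rw [List.getElem?_eq_getElem (hwl _ (hq1lt x))] at h
    exact Option.some.inj h
  have hvq2 : ∀ x, w[q2 x]'(hwl _ (hq2lt x)) = x := by
    intro x
    have h := (hq x (q2 x)).mpr (Or.inr rfl)
    rw [List.getElem?_eq_getElem (hwl _ (hq2lt x))] at h
    exact Option.some.inj h
  have hget : ∀ (i : ℕ) (h : i < w.length), i = q1 (w[i]'h) ∨ i = q2 (w[i]'h) := by
    intro i h
    exact (hq _ i).mp (List.getElem?_eq_getElem h)
  have hPhi : ∀ σ : Equiv.Perm (Fin (2*k)),
      Phi σ = w ↔ ∀ i : Fin (2*k), h2 (σ i) = w[i.val]'(hwl _ i.isLt) := by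
    intro σ
    constructor
    · intro h i
      have h1 : i.val < (Phi σ).length := by simp [Phi]
      have h4 := List.getElem_of_eq h h1
      rw [← h4]
      simp [Phi, List.getElem_ofFn]
    · intro h
      apply List.ext_getElem
      · simp [Phi, hlen]
      · intro n h1 h2'
        have h3 : n < 2*k := by simpa [Phi] using h1
        have := h ⟨n, h3⟩
        simpa [Phi, List.getElem_ofFn] using this
  -- injectivity of gmap
  have hinj : ∀ ε : Fin k → Bool, Function.Injective (gmap w q1 ε hwl) := by
    intro ε i i' heq
    have hval := congrArg Fin.val heq
    simp only [gmap] at hval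
    have hvv : w[i.val]'(hwl _ i.isLt) = w[i'.val]'(hwl _ i'.isLt) := by
      apply Fin.ext
      split_ifs at hval <;> omega
    rcases hget i.val (hwl _ i.isLt) with h1 | h1 <;>
      rcases hget i'.val (hwl _ i'.isLt) with h2 | h2 <;>
        apply Fin.ext <;> rw [← hvv] at h2 hval <;> split_ifs at hval <;>
          (try omega) <;>
          (try (cases hε : ε (w[i.val]'(hwl _ i.isLt)) <;> rw [hε] at hval <;> simp at hval <;> omega))
  have hbij : ∀ ε : Fin k → Bool, Function.Bijective (gmap w q1 ε hwl) :=
    fun ε => Finite.injective_iff_bijective.mp (hinj ε)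
  have hfib : ∀ ε : Fin k → Bool, Phi (Equiv.ofBijective _ (hbij ε)) = w := by
    intro ε
    rw [hPhi]
    intro i
    apply Fin.ext
    show (gmap w q1 ε hwl i).val / 2 = _
    simp only [gmap]
    split_ifs <;> omega
  have e : (Fin k → Bool) ≃ {σ : Equiv.Perm (Fin (2*k)) // Phi σ = w} := by
    refine ⟨fun ε => ⟨Equiv.ofBijective _ (hbij ε), hfib ε⟩,
      fun σp x => decide (((σp.1) ⟨q1 x, hq1lt x⟩).val % 2 = 0), ?_, ?_⟩
    · -- left inverse
      intro ε
      funext x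
      have h1 : (Equiv.ofBijective _ (hbij ε)) (⟨q1 x, hq1lt x⟩ : Fin (2*k))
          = gmap w q1 ε hwl ⟨q1 x, hq1lt x⟩ := rfl
      simp only [h1, gmap, hvq1 x]
      cases hε : ε x <;> simp [hvq1 x, hε] <;> try omega
    · -- right inverse
      rintro ⟨σ, hσ⟩
      apply Subtype.ext
      apply Equiv.ext
      intro i
      show gmap w q1 (fun x => decide ((σ ⟨q1 x, hq1lt x⟩).val % 2 = 0)) hwl i = σ i
      have hpt := (hPhi σ).mp hσ
      set x := w[i.val]'(hwl _ i.isLt) with hxdef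
      have hσi : (σ i).val / 2 = x.val := congrArg Fin.val (hpt i)
      have hj : (σ ⟨q1 x, hq1lt x⟩).val / 2 = x.val := by
        have := hpt ⟨q1 x, hq1lt x⟩
        have h5 := congrArg Fin.val this
        simpa [hvq1 x, Aux8.h2] using h5
      apply Fin.ext
      rcases hget i.val (hwl _ i.isLt) with h1 | h1
      · -- i is the q1-position
        have hieq : (⟨q1 x, hq1lt x⟩ : Fin (2*k)) = i := by
          apply Fin.ext
          exact h1.symm
        have h1' : i.val = q1 x := h1
        simp only [gmap, ← hxdef, if_pos h1']
        rw [hieq]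
        by_cases hd : (σ i).val % 2 = 0 <;> simp [hd]
        · omega
        · omega
      · -- i is the q2-position
        have h1' : i.val = q2 x := h1
        have hne : (⟨q1 x, hq1lt x⟩ : Fin (2*k)) ≠ i := by
          intro hcon
          have := congrArg Fin.val hcon
          simp at this
          have := hlt x
          omega
        have hσne : (σ ⟨q1 x, hq1lt x⟩).val ≠ (σ i).val := by
          intro hcon
          exact hne (σ.injective (Fin.ext hcon))
        have hq1ne : i.val ≠ q1 x := by
          have := hlt x
          omega
        simp only [gmap, ← hxdef, if_neg hq1ne]
        by_cases hd : (σ ⟨q1 x, hq1lt x⟩).val % 2 = 0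
        · have hd2 : (σ i).val = 2 * x.val + 1 := by omega
          simp [hd, hd2]
        · have hd2 : (σ i).val = 2 * x.val := by omega
          simp [hd, hd2]
  have hcard : (Finset.univ.filter fun σ : Equiv.Perm (Fin (2*k)) => Phi σ = w).card
      = Fintype.card {σ : Equiv.Perm (Fin (2*k)) // Phi σ = w} :=
    (Fintype.card_subtype _).symm
  rw [hcard, ← Fintype.card_congr e]
  simp
end Fiber

theorem card_count_two (k : ℕ) :
    {w : List (Fin k) | ∀ x, w.count x = 2}.Finite ∧
    {w : List (Fin k) | ∀ x, w.count x = 2}.ncard = Nat.factorial (2 * k) / 2 ^ k := by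
  classical
  set t : Finset (List (Fin k)) := Finset.univ.image (Phi (k := k)) with ht
  have hmem : ∀ w ∈ t, ∀ x, w.count x = 2 := by
    intro w hw x
    obtain ⟨σ, -, rfl⟩ := Finset.mem_image.mp hw
    exact phi_mem σ x
  have hsur : ∀ w : List (Fin k), (∀ x, w.count x = 2) → w ∈ t := by
    intro w hw
    have h := fiber_card w hw
    have hpos : 0 < (Finset.univ.filter fun σ : Equiv.Perm (Fin (2*k)) => Phi σ = w).card := by
      rw [h]; positivity
    obtain ⟨σ, hσ⟩ := Finset.card_pos.mp hpos
    simp only [Finset.mem_filter] at hσ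
    exact Finset.mem_image.mpr ⟨σ, Finset.mem_univ _, hσ.2⟩
  have hseteq : {w : List (Fin k) | ∀ x, w.count x = 2} = ↑t := by
    ext w
    simp only [Set.mem_setOf_eq, Finset.mem_coe]
    exact ⟨hsur w, fun h x => hmem w h x⟩
  have hsum : (Finset.univ : Finset (Equiv.Perm (Fin (2*k)))).card
      = ∑ w ∈ t, (Finset.univ.filter fun σ : Equiv.Perm (Fin (2*k)) => Phi σ = w).card :=
    Finset.card_eq_sum_card_fiberwise
      (fun σ _ => Finset.mem_image_of_mem _ (Finset.mem_univ σ))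
  have hconst : ∑ w ∈ t, (Finset.univ.filter fun σ : Equiv.Perm (Fin (2*k)) => Phi σ = w).card
      = t.card * 2^k := by
    rw [Finset.sum_congr rfl (fun w hw => fiber_card w (hmem w hw))]
    simp [mul_comm]
  have hcardU : (Finset.univ : Finset (Equiv.Perm (Fin (2*k)))).card = (2*k).factorial := by
    rw [Finset.card_univ, Fintype.card_perm, Fintype.card_fin]
  have hkey : t.card * 2^k = (2*k).factorial := by
    rw [← hconst, ← hsum, hcardU]
  refine ⟨by rw [hseteq]; exact t.finite_toSet, ?_⟩
  rw [hseteq, Set.ncard_coe_finset]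
  have h2 : 0 < 2^k := pow_pos (by norm_num) k
  rw [← hkey, Nat.mul_div_cancel _ h2]


end Aux8

theorem stmt8 (k : ℕ) (hk : 1 ≤ k) :
    {W : List (Fin k) | ExtremalPat 2 W}.Finite ∧
    {W : List (Fin k) | ExtremalPat 2 W}.ncard = Nat.factorial (2 * k) / 2 ^ k := by
  have hset : {W : List (Fin k) | ExtremalPat 2 W}
      = Aux8.D '' {w : List (Fin k) | ∀ x, w.count x = 2} := by
    ext W
    simp only [Set.mem_setOf_eq, Set.mem_image]
    constructor
    · intro h
      obtain ⟨w, hw, rfl⟩ := Aux8.doubling_of_extremal W h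
      exact ⟨w, hw, rfl⟩
    · rintro ⟨w, hw, rfl⟩
      exact Aux8.extremal_of_doubling w hw
  obtain ⟨hfin, hcard⟩ := Aux8.card_count_two k
  rw [hset]
  refine ⟨hfin.image _, ?_⟩
  rw [Set.ncard_image_of_injective _ Aux8.D_inj, hcard]
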